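/- Let d ≥ 1 be odd, and let F_d(n) be the set of (d+1)-subsets of [n] of the form ∪_{j=1}^{(d+1)/2} {i_j, i_j+1} with i_{j+1} > i_j + 1 for all j. The map α sending such F to the monomial ∏_{j=1}^{(d+1)/2} Y_{e_j} with e_j = i_j - 2j + 1 (Y_0 = 1) is an order-preserving bijection between F_d(n) with the componentwise partial order on sets and the monomials of degree ≤ (d+1)/2 in Y_1,...,Y_{n-d-1} with the componentwise partial order on extended representations. -/

import Mathlib

/-- The set `∪_{j} {i_j, i_j + 1}` determined by a tuple of pair positions. -/
def pairUnion (c : ℕ) (i : Fin c → ℕ) : Finset ℕ :=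
  Finset.univ.biUnion (fun j => {i j, i j + 1})

/-- `F_d(n)`: the `(d+1)`-subsets of `[n]` of the form
`∪_{j=1}^{(d+1)/2} {i_j, i_j + 1}` with `i_{j+1} > i_j + 1` for all `j`. -/
def Fdn (d n : ℕ) : Set (Finset ℕ) :=
  {F | ∃ i : Fin ((d + 1) / 2) → ℕ,
    (∀ j, 1 ≤ i j) ∧ (∀ j, i j + 1 ≤ n) ∧
    (∀ j k : Fin ((d + 1) / 2), (j : ℕ) < (k : ℕ) → i j + 1 < i k) ∧
    F = pairUnion ((d + 1) / 2) i}

/-- Monomials of degree at most `c` in the variables `Y_1, …, Y_b`, encoded by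
their extended representations: nondecreasing tuples `e : Fin c → ℕ` with all
entries `≤ b` (`Y_0 = 1` is padding). -/
def Mon (c b : ℕ) : Set (Fin c → ℕ) :=
  {e | Monotone e ∧ ∀ j, e j ≤ b}

/-- The inverse `α⁻¹` of Kalai's bijection `α`: the monomial with extended
representation `e` maps to the set with `j`-th pair starting at
`i_j = e_j + 2j - 1` (1-indexed), i.e. displaced by `e_j` from its leftmost
possible position. -/
def alphaInv (c : ℕ) (e : Fin c → ℕ) : Finset ℕ :=
  pairUnion c (fun j => e j + 2 * (j : ℕ) + 1)

/-- The componentwise partial order `≤_p` on finite subsets of `ℕ`: comparing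
the increasing enumerations entrywise. -/
def pLeFinset (S T : Finset ℕ) : Prop :=
  List.Forall₂ (· ≤ ·) (S.sort (· ≤ ·)) (T.sort (· ≤ ·))

/-- Flattened tuple of a pair union. -/
def pf (c : ℕ) (i : Fin c → ℕ) : Fin (2 * c) → ℕ :=
  fun k => i ⟨(k : ℕ) / 2, by have := k.isLt; omega⟩ + (k : ℕ) % 2

lemma pf_val {c : ℕ} (i : Fin c → ℕ) (k : Fin (2 * c)) (j : Fin c)
    (h : (k : ℕ) / 2 = (j : ℕ)) : pf c i k = i j + (k : ℕ) % 2 := by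
  unfold pf
  have : (⟨(k : ℕ) / 2, by have := k.isLt; omega⟩ : Fin c) = j := Fin.ext h
  rw [this]

lemma pf_strictMono {c : ℕ} {i : Fin c → ℕ}
    (hgap : ∀ j k : Fin c, (j : ℕ) < (k : ℕ) → i j + 1 < i k) :
    StrictMono (pf c i) := by
  intro k l hkl
  have hkl' : (k : ℕ) < (l : ℕ) := hkl
  unfold pf
  rcases Nat.lt_or_ge ((k : ℕ) / 2) ((l : ℕ) / 2) with h | h
  · have := hgap ⟨(k : ℕ) / 2, by have := k.isLt; omega⟩
      ⟨(l : ℕ) / 2, by have := l.isLt; omega⟩ h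
    omega
  · have h1 : (k : ℕ) / 2 = (l : ℕ) / 2 := by omega
    have h2 : (k : ℕ) % 2 < (l : ℕ) % 2 := by omega
    have : (⟨(k : ℕ) / 2, by have := k.isLt; omega⟩ : Fin c) =
        ⟨(l : ℕ) / 2, by have := l.isLt; omega⟩ := Fin.ext h1
    rw [this]
    omega

lemma pairUnion_eq_toFinset (c : ℕ) (i : Fin c → ℕ) :
    pairUnion c i = (List.ofFn (pf c i)).toFinset := by
  ext x
  simp only [pairUnion, Finset.mem_biUnion, Finset.mem_univ, true_and,
    List.mem_toFinset, List.mem_ofFn, Set.mem_range, Finset.mem_insert,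
    Finset.mem_singleton]
  constructor
  · rintro ⟨j, hj | hj⟩
    · refine ⟨⟨2 * (j : ℕ), by have := j.isLt; omega⟩, ?_⟩
      rw [pf_val i _ j (by show 2 * (j : ℕ) / 2 = (j : ℕ); omega)]
      have h0 : ((⟨2 * (j : ℕ), by have := j.isLt; omega⟩ : Fin (2 * c)) : ℕ)
          = 2 * (j : ℕ) := rfl
      omega
    · refine ⟨⟨2 * (j : ℕ) + 1, by have := j.isLt; omega⟩, ?_⟩
      rw [pf_val i _ j (by show (2 * (j : ℕ) + 1) / 2 = (j : ℕ); omega)]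
      have h0 : ((⟨2 * (j : ℕ) + 1, by have := j.isLt; omega⟩ : Fin (2 * c)) : ℕ)
          = 2 * (j : ℕ) + 1 := rfl
      omega
  · rintro ⟨k, rfl⟩
    refine ⟨⟨(k : ℕ) / 2, by have := k.isLt; omega⟩, ?_⟩
    rw [pf_val i k ⟨(k : ℕ) / 2, by have := k.isLt; omega⟩ rfl]
    omega

lemma sort_pairUnion {c : ℕ} {i : Fin c → ℕ}
    (hgap : ∀ j k : Fin c, (j : ℕ) < (k : ℕ) → i j + 1 < i k) :
    (pairUnion c i).sort (· ≤ ·) = List.ofFn (pf c i) := by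
  rw [pairUnion_eq_toFinset]
  have hs : (List.ofFn (pf c i)).Pairwise (· < ·) :=
    List.sortedLT_iff_pairwise.1 (List.sortedLT_ofFn_iff.2 (pf_strictMono hgap))
  exact (List.toFinset_sort (· ≤ ·) hs.nodup).2 (hs.imp le_of_lt)

lemma pLe_pairUnion {c : ℕ} {i i' : Fin c → ℕ}
    (hgap : ∀ j k : Fin c, (j : ℕ) < (k : ℕ) → i j + 1 < i k)
    (hgap' : ∀ j k : Fin c, (j : ℕ) < (k : ℕ) → i' j + 1 < i' k) :
    pLeFinset (pairUnion c i) (pairUnion c i') ↔ ∀ j, i j ≤ i' j := by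
  unfold pLeFinset
  rw [sort_pairUnion hgap, sort_pairUnion hgap', List.forall₂_iff_get]
  simp only [List.length_ofFn, List.get_ofFn, true_and]
  constructor
  · intro h j
    have hlt : 2 * (j : ℕ) < 2 * c := by have := j.isLt; omega
    have := h (2 * (j : ℕ)) hlt hlt
    rw [pf_val i _ j (by exact (by omega : 2 * (j : ℕ) / 2 = (j : ℕ))),
        pf_val i' _ j (by exact (by omega : 2 * (j : ℕ) / 2 = (j : ℕ)))] at this
    simp only [Fin.coe_cast] at this
    omega
  · intro h k h1 h2
    rw [pf_val i _ ⟨k / 2, by omega⟩ rfl, pf_val i' _ ⟨k / 2, by omega⟩ rfl]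
    have := h ⟨k / 2, by omega⟩
    simp only [Fin.coe_cast]
    omega

/-- For odd `d` and `n ≥ d + 1`, the correspondence `α` between `F_d(n)` and the
monomials of degree `≤ (d+1)/2` in `Y_1, …, Y_{n-d-1}` (given by
`e_j = i_j - 2j + 1`) is a bijection, and it is order-preserving between the
componentwise partial orders on extended representations and on sets. -/
theorem stmt19 (d n : ℕ) (hd : Odd d) (hn : d + 1 ≤ n) :
    Set.BijOn (alphaInv ((d + 1) / 2)) (Mon ((d + 1) / 2) (n - d - 1)) (Fdn d n) ∧
    ∀ e ∈ Mon ((d + 1) / 2) (n - d - 1), ∀ e' ∈ Mon ((d + 1) / 2) (n - d - 1),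
      ((∀ j, e j ≤ e' j) ↔
        pLeFinset (alphaInv ((d + 1) / 2) e) (alphaInv ((d + 1) / 2) e')) := by
  set c := (d + 1) / 2 with hcdef
  have h2c : 2 * c = d + 1 := by
    obtain ⟨m, rfl⟩ := hd
    omega
  -- monotone extended representations give gap sequences
  have hgap_of_mono : ∀ {e : Fin c → ℕ}, Monotone e →
      ∀ j k : Fin c, (j : ℕ) < (k : ℕ) →
        (fun j : Fin c => e j + 2 * (j : ℕ) + 1) j + 1 <
        (fun j : Fin c => e j + 2 * (j : ℕ) + 1) k := by
    intro e hmono j k hjk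
    have := hmono (le_of_lt (show j < k from hjk))
    simp only
    omega
  constructor
  · refine ⟨?_, ?_, ?_⟩
    · -- MapsTo
      intro e ⟨hmono, hb⟩
      refine ⟨fun j => e j + 2 * (j : ℕ) + 1, fun j => Nat.le_add_left _ _, fun j => ?_,
        hgap_of_mono hmono, rfl⟩
      have := hb j
      have := j.isLt
      simp only
      omega
    · -- InjOn
      intro e he e' he' heq
      have hg := hgap_of_mono he.1
      have hg' := hgap_of_mono he'.1
      have h1 : List.ofFn (pf c fun j : Fin c => e j + 2 * (j : ℕ) + 1) =
          List.ofFn (pf c fun j : Fin c => e' j + 2 * (j : ℕ) + 1) := by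
        rw [← sort_pairUnion hg, ← sort_pairUnion hg']
        exact congrArg (fun s : Finset ℕ => s.sort (· ≤ ·)) heq
      have h2 := List.ofFn_injective h1
      funext j
      have h3 := congrFun h2 ⟨2 * (j : ℕ), by have := j.isLt; omega⟩
      rw [pf_val _ _ j (by show 2 * (j : ℕ) / 2 = (j : ℕ); omega),
        pf_val _ _ j (by show 2 * (j : ℕ) / 2 = (j : ℕ); omega)] at h3
      simp only at h3
      omega
    · -- SurjOn
      intro F hF
      obtain ⟨i, h1, hnn, hgap, rfl⟩ := hF
      have hlb : ∀ v (hv : v < c), 2 * v + 1 ≤ i ⟨v, hv⟩ := by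
        intro v
        induction v with
        | zero => intro hv; simpa using h1 ⟨0, hv⟩
        | succ w ih =>
          intro hv
          have hw : w < c := by omega
          have hstep := hgap ⟨w, hw⟩ ⟨w + 1, hv⟩ (Nat.lt_succ_self w)
          have := ih hw
          omega
      have hub : ∀ v (hv : v < c) w (hw : w < c), v ≤ w →
          i ⟨v, hv⟩ + 2 * (w - v) ≤ i ⟨w, hw⟩ := by
        intro v hv w
        induction w with
        | zero =>
          intro hw hvw
          have hv0 : v = 0 := by omega
          subst hv0
          have : i ⟨0, hv⟩ = i ⟨0, hw⟩ := rfl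
          omega
        | succ u ih =>
          intro hw hvw
          rcases Nat.eq_or_lt_of_le hvw with heq | hlt
          · have : i ⟨v, hv⟩ = i ⟨u + 1, hw⟩ := congrArg i (Fin.ext heq)
            omega
          · have hu : u < c := by omega
            have := ih hu (by omega)
            have hstep := hgap ⟨u, hu⟩ ⟨u + 1, hw⟩ (Nat.lt_succ_self u)
            omega
      refine ⟨fun j => i j - (2 * (j : ℕ) + 1), ⟨?_, ?_⟩, ?_⟩
      · -- Monotone
        intro j k hjk
        rcases Nat.eq_or_lt_of_le (show (j : ℕ) ≤ (k : ℕ) from hjk) with heq | hlt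
        · have : j = k := Fin.ext heq
          subst this
          exact le_refl _
        · have hub' := hub (j : ℕ) j.isLt (k : ℕ) k.isLt hjk
          have hlbj := hlb (j : ℕ) j.isLt
          have e1 : i ⟨(j : ℕ), j.isLt⟩ = i j := congrArg i (Fin.ext rfl)
          have e2 : i ⟨(k : ℕ), k.isLt⟩ = i k := congrArg i (Fin.ext rfl)
          simp only
          omega
      · -- bounded by n - d - 1
        intro j
        have hub' := hub (j : ℕ) j.isLt (c - 1) (by omega) (by have := j.isLt; omega)
        have hnn' := hnn ⟨c - 1, by omega⟩
        have e1 : i ⟨(j : ℕ), j.isLt⟩ = i j := congrArg i (Fin.ext rfl)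
        have e2 : i (⟨c - 1, by omega⟩ : Fin c) = i ⟨c - 1, by omega⟩ :=
          congrArg i (Fin.ext rfl)
        have hlbj := hlb (j : ℕ) j.isLt
        have := j.isLt
        show i j - (2 * (j : ℕ) + 1) ≤ n - d - 1
        omega
      · -- alphaInv applied to e recovers F
        unfold alphaInv
        congr 1
        funext j
        have hlbj := hlb (j : ℕ) j.isLt
        have e1 : i ⟨(j : ℕ), j.isLt⟩ = i j := congrArg i (Fin.ext rfl)
        simp only
        omega
  · -- order preservation
    intro e he e' he'
    have hg := hgap_of_mono he.1
    have hg' := hgap_of_mono he'.1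
    unfold alphaInv
    rw [pLe_pairUnion hg hg']
    constructor
    · intro h j
      have := h j
      omega
    · intro h j
      have := h j
      omega
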